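/- The TA-SCL Markov chain is irreducible: for every pair of states i, j ∈ {0,1,…,S} there exists an integer k ≥ 1 such that the (i,j) entry of the k-th matrix power P^k is strictly positive. -/

import Mathlib

/-- Transition matrix of the TA-SCL Markov chain with parameters `βn`, `βd`
(speed gain `βn/βd`), buffer size `ζ`, and small-decoder block error rate `ε`.
States are `0, 1, …, S` where `S = βn*ζ + βn`. -/
def tasclP (βn βd ζ : ℕ) (ε : ℝ) :
    Matrix (Fin (βn * ζ + βn + 1)) (Fin (βn * ζ + βn + 1)) ℝ :=
  fun s j =>
    if (s : ℕ) ≤ βd then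
      -- idle state: goes to 0 with prob 1-ε, to βn with prob ε
      (if (j : ℕ) = 0 then 1 - ε else 0) + (if (j : ℕ) = βn then ε else 0)
    else if (s : ℕ) ≤ βn * ζ + βd then
      -- safe state: goes to s-βd with prob 1-ε, to s+βn-βd with prob ε
      (if (j : ℕ) = (s : ℕ) - βd then 1 - ε else 0) +
        (if (j : ℕ) = (s : ℕ) + βn - βd then ε else 0)
    else
      -- hazard state: goes to s-βd with prob 1
      if (j : ℕ) = (s : ℕ) - βd then 1 else 0

section aux

variable (βn βd ζ : ℕ) (ε : ℝ)

lemma tasclP_nonneg (hε0 : 0 ≤ ε) (hε1 : ε ≤ 1) :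
    ∀ i j : Fin (βn * ζ + βn + 1), 0 ≤ tasclP βn βd ζ ε i j := by
  intro i j
  unfold tasclP
  split_ifs <;> linarith

lemma tasclP_pow_nonneg (hε0 : 0 ≤ ε) (hε1 : ε ≤ 1) (k : ℕ) :
    ∀ i j : Fin (βn * ζ + βn + 1), 0 ≤ (tasclP βn βd ζ ε ^ k) i j := by
  induction k with
  | zero =>
    intro i j
    rw [pow_zero]
    rcases eq_or_ne i j with h | h
    · simp [Matrix.one_apply, h]
    · simp [Matrix.one_apply, h]
  | succ k ih =>
    intro i j
    rw [pow_succ, Matrix.mul_apply]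
    exact Finset.sum_nonneg fun m _ =>
      mul_nonneg (ih i m) (tasclP_nonneg βn βd ζ ε hε0 hε1 m j)

lemma tasclP_pow_trans (hε0 : 0 ≤ ε) (hε1 : ε ≤ 1) {a b : ℕ}
    {i j l : Fin (βn * ζ + βn + 1)}
    (h1 : 0 < (tasclP βn βd ζ ε ^ a) i j) (h2 : 0 < (tasclP βn βd ζ ε ^ b) j l) :
    0 < (tasclP βn βd ζ ε ^ (a + b)) i l := by
  rw [pow_add, Matrix.mul_apply]
  refine Finset.sum_pos' (fun m _ => mul_nonneg (tasclP_pow_nonneg βn βd ζ ε hε0 hε1 a i m)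
    (tasclP_pow_nonneg βn βd ζ ε hε0 hε1 b m l)) ⟨j, Finset.mem_univ j, mul_pos h1 h2⟩

variable (hβd : 0 < βd) (hβ : βd < βn) (hζ : 0 < ζ) (hε0 : 0 < ε) (hε1 : ε < 1)

include hβd hβ hζ hε0 hε1

-- single step lemmas
lemma step_idle_zero {i : ℕ} (hi : i ≤ βd) (hiN : i < βn * ζ + βn + 1) :
    0 < tasclP βn βd ζ ε ⟨i, hiN⟩ ⟨0, by omega⟩ := by
  unfold tasclP
  simp only [Fin.val_mk]
  rw [if_pos hi, if_pos trivial, if_neg (by omega)]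
  linarith

lemma step_idle_bn {i : ℕ} (hi : i ≤ βd) (hiN : i < βn * ζ + βn + 1) :
    0 < tasclP βn βd ζ ε ⟨i, hiN⟩ ⟨βn, by omega⟩ := by
  unfold tasclP
  simp only [Fin.val_mk]
  rw [if_pos hi, if_neg (by omega), if_pos trivial]
  linarith

lemma step_down {i t : ℕ} (hi : βd < i) (hiN : i < βn * ζ + βn + 1)
    (ht : t = i - βd) (htN : t < βn * ζ + βn + 1) :
    0 < tasclP βn βd ζ ε ⟨i, hiN⟩ ⟨t, htN⟩ := by
  subst ht
  unfold tasclP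
  simp only [Fin.val_mk]
  rw [if_neg (by omega)]
  by_cases h2 : i ≤ βn * ζ + βd
  · rw [if_pos h2, if_pos trivial, if_neg (by omega)]
    linarith
  · rw [if_neg h2, if_pos trivial]
    linarith

lemma step_up {i t : ℕ} (hi1 : βd < i) (hi2 : i ≤ βn * ζ + βd)
    (ht : t = i + βn - βd) (hiN : i < βn * ζ + βn + 1) (htN : t < βn * ζ + βn + 1) :
    0 < tasclP βn βd ζ ε ⟨i, hiN⟩ ⟨t, htN⟩ := by
  subst ht
  unfold tasclP
  simp only [Fin.val_mk]
  rw [if_neg (by omega), if_pos hi2, if_neg (by omega), if_pos trivial]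
  linarith

-- reach 0 from anywhere, in at least one step
lemma reach_zero : ∀ i : ℕ, ∀ hiN : i < βn * ζ + βn + 1,
    ∃ k : ℕ, 1 ≤ k ∧ 0 < (tasclP βn βd ζ ε ^ k) ⟨i, hiN⟩ ⟨0, by omega⟩ := by
  intro i
  induction i using Nat.strong_induction_on with
  | _ i ih =>
    intro hiN
    by_cases hi : i ≤ βd
    · refine ⟨1, le_refl 1, ?_⟩
      rw [pow_one]
      exact step_idle_zero βn βd ζ ε hβd hβ hζ hε0 hε1 hi hiN
    · obtain ⟨k, hk1, hk2⟩ := ih (i - βd) (by omega) (by omega)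
      refine ⟨1 + k, by omega, ?_⟩
      exact tasclP_pow_trans βn βd ζ ε (le_of_lt hε0) (le_of_lt hε1)
        (by rw [pow_one]; exact step_down βn βd ζ ε hβd hβ hζ hε0 hε1 (by omega) hiN rfl (by omega)) hk2

-- the greedy climb inside the safe region
lemma climb : ∀ n A B s j : ℕ, A + B = n →
    βd < s → (hs2 : s ≤ βn * ζ + βd) → βd < j → (hj2 : j ≤ βn * ζ + βd) →
    s + A * (βn - βd) = j + B * βd →
    ∃ k : ℕ, 0 < (tasclP βn βd ζ ε ^ k) ⟨s, by omega⟩ ⟨j, by omega⟩ := by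
  intro n
  induction n with
  | zero =>
    intro A B s j hAB hs1 hs2 hj1 hj2 heq
    have hA : A = 0 := by omega
    have hB : B = 0 := by omega
    subst hA hB
    have : s = j := by omega
    subst this
    exact ⟨0, by rw [pow_zero]; simp [Matrix.one_apply]⟩
  | succ n ih =>
    intro A B s j hAB hs1 hs2 hj1 hj2 heq
    have hbn : βn ≤ βn * ζ := Nat.le_mul_of_pos_right βn hζ
    by_cases hup : A ≠ 0 ∧ s + (βn - βd) ≤ βn * ζ + βd
    · -- go up
      obtain ⟨hA, hsu⟩ := hup
      obtain ⟨A', rfl⟩ := Nat.exists_eq_succ_of_ne_zero hA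
      have heq' : (s + (βn - βd)) + A' * (βn - βd) = j + B * βd := by
        rw [Nat.succ_mul] at heq; omega
      obtain ⟨k, hk⟩ := ih A' B (s + (βn - βd)) j (by omega) (by omega) hsu hj1 hj2 heq'
      refine ⟨1 + k, tasclP_pow_trans βn βd ζ ε (le_of_lt hε0) (le_of_lt hε1) ?_ hk⟩
      rw [pow_one]
      exact step_up βn βd ζ ε hβd hβ hζ hε0 hε1 hs1 hs2 (by omega) (by omega) (by omega)
    · -- go down
      push_neg at hup
      have hB : B ≠ 0 := by
        rcases Nat.eq_zero_or_pos A with hA | hA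
        · subst hA; simp at heq; omega
        · intro hB0; subst hB0
          have h1 : 1 * (βn - βd) ≤ A * (βn - βd) :=
            Nat.mul_le_mul_right _ hA
          have := hup (by omega)
          omega
      obtain ⟨B', rfl⟩ := Nat.exists_eq_succ_of_ne_zero hB
      have hdown1 : βd < s - βd := by
        rcases Nat.eq_zero_or_pos A with hA | hA
        · subst hA
          simp only [Nat.zero_mul, Nat.zero_add] at heq
          have h2 : βd ≤ B'.succ * βd := Nat.le_mul_of_pos_left βd (Nat.succ_pos B')
          omega
        · have := hup (by omega)
          omega
      have heq' : (s - βd) + A * (βn - βd) = j + B' * βd := by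
        rw [Nat.succ_mul] at heq; omega
      have hAB' : A + B' = n := by omega
      have hs2' : s - βd ≤ βn * ζ + βd := by omega
      obtain ⟨k, hk⟩ := ih A B' (s - βd) j hAB' hdown1 hs2' hj1 hj2 heq'
      refine ⟨1 + k, tasclP_pow_trans βn βd ζ ε (le_of_lt hε0) (le_of_lt hε1) ?_ hk⟩
      rw [pow_one]
      exact step_down βn βd ζ ε hβd hβ hζ hε0 hε1 hs1 (by omega) rfl (by omega)

omit hβd hβ hζ hε0 hε1 in
-- Bezout-type lemma
lemma bezout_nat (u d : ℕ) (hu : 0 < u) (hd : 0 < d) (hcop : Nat.Coprime u d)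
    (c j : ℕ) : ∃ A B : ℕ, c + A * u = j + B * d := by
  rcases Nat.lt_or_ge 1 d with hd1 | hd1
  · obtain ⟨A₀, -, hA₀⟩ := Nat.exists_mul_mod_eq_one_of_coprime hcop hd1
    obtain ⟨q, hq⟩ : ∃ q, u * A₀ = d * q + 1 := by
      refine ⟨u * A₀ / d, ?_⟩
      have := Nat.div_add_mod (u * A₀) d
      omega
    have hcM : c ≤ c * d := Nat.le_mul_of_pos_right c hd
    set t := j + c * d - c with ht
    have hct : c + t = j + c * d := by omega
    refine ⟨t * A₀, c + t * q, ?_⟩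
    calc c + t * A₀ * u = c + t * (d * q + 1) := by
          rw [mul_assoc, mul_comm A₀ u, hq]
      _ = (c + t) + (t * q) * d := by ring
      _ = (j + c * d) + (t * q) * d := by rw [hct]
      _ = j + (c + t * q) * d := by ring
  · have hd' : d = 1 := by omega
    subst hd'
    refine ⟨j, c + j * u - j, ?_⟩
    have : j ≤ j * u := Nat.le_mul_of_pos_right j hu
    omega

-- reach any state from 0
lemma reach_from_zero (hcop : Nat.Coprime βn βd) :
    ∀ j : ℕ, ∀ hjN : j < βn * ζ + βn + 1,
    ∃ k : ℕ, 0 < (tasclP βn βd ζ ε ^ k) ⟨0, by omega⟩ ⟨j, hjN⟩ := by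
  have hbn : βn ≤ βn * ζ := Nat.le_mul_of_pos_right βn hζ
  have hcop' : Nat.Coprime (βn - βd) βd :=
    (Nat.coprime_sub_self_left (le_of_lt hβ)).mpr hcop
  -- first: reach any safe state j (βd < j ≤ βn*ζ + βd)
  have safe : ∀ j : ℕ, βd < j → (hj2 : j ≤ βn * ζ + βd) →
      ∃ k : ℕ, 0 < (tasclP βn βd ζ ε ^ k) ⟨0, by omega⟩ ⟨j, by omega⟩ := by
    intro j hj1 hj2
    obtain ⟨A, B, hAB⟩ := bezout_nat (βn - βd) βd (by omega) hβd hcop' βn j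
    obtain ⟨k, hk⟩ := climb βn βd ζ ε hβd hβ hζ hε0 hε1 (A + B) A B βn j rfl
      hβ (by omega) hj1 hj2 hAB
    refine ⟨1 + k, tasclP_pow_trans βn βd ζ ε (le_of_lt hε0) (le_of_lt hε1) ?_ hk⟩
    rw [pow_one]
    exact step_idle_bn βn βd ζ ε hβd hβ hζ hε0 hε1 (Nat.zero_le βd) (by omega)
  intro j hjN
  rcases Nat.eq_zero_or_pos j with hj0 | hj0
  · subst hj0
    exact ⟨0, by rw [pow_zero]; simp [Matrix.one_apply]⟩
  by_cases hj1 : j ≤ βd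
  · -- small positive target: reach j + βd (safe) then step down
    obtain ⟨k, hk⟩ := safe (j + βd) (by omega) (by omega)
    refine ⟨k + 1, tasclP_pow_trans βn βd ζ ε (le_of_lt hε0) (le_of_lt hε1) hk ?_⟩
    rw [pow_one]
    exact step_down βn βd ζ ε hβd hβ hζ hε0 hε1 (i := j + βd) (by omega) (by omega)
      (by omega) (by omega)
  by_cases hj2 : j ≤ βn * ζ + βd
  · exact safe j (by omega) hj2
  · -- hazard target: reach j - (βn - βd) (safe) then step up
    obtain ⟨k, hk⟩ := safe (j + βd - βn) (by omega) (by omega)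
    refine ⟨k + 1, tasclP_pow_trans βn βd ζ ε (le_of_lt hε0) (le_of_lt hε1) hk ?_⟩
    rw [pow_one]
    exact step_up βn βd ζ ε hβd hβ hζ hε0 hε1 (i := j + βd - βn) (by omega) (by omega)
      (by omega) (by omega) (by omega)

end aux

/-- The TA-SCL Markov chain is irreducible: for every pair of states `i, j`
there exists `k ≥ 1` with `(P^k) i j > 0`. -/
theorem tascl_irreducible (βn βd ζ : ℕ) (hβd : 0 < βd) (hβ : βd < βn)
    (hcop : Nat.Coprime βn βd) (hζ : 0 < ζ) (ε : ℝ) (hε0 : 0 < ε) (hε1 : ε < 1) :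
    ∀ i j : Fin (βn * ζ + βn + 1),
      ∃ k : ℕ, 1 ≤ k ∧ 0 < (tasclP βn βd ζ ε ^ k) i j := by
  intro i j
  obtain ⟨k₁, hk₁, h1⟩ := reach_zero βn βd ζ ε hβd hβ hζ hε0 hε1 i.val i.isLt
  obtain ⟨k₂, h2⟩ := reach_from_zero βn βd ζ ε hβd hβ hζ hε0 hε1 hcop j.val j.isLt
  refine ⟨k₁ + k₂, by omega, ?_⟩
  have := tasclP_pow_trans βn βd ζ ε (le_of_lt hε0) (le_of_lt hε1) h1 h2
  simpa using this
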